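/- Let A be a nonnegative primitive tensor of order m and dimension n ≥ 2. Then there exist j ∈ [n] and an integer l with 1 ≤ l ≤ n−1 such that M(A^l)_{jj} > 0. -/
import Mathlib


open Finset

/- An order-`m` dimension-`n` nonnegative tensor is encoded as
`A : Fin n → (Fin (m-1) → Fin n) → ℝ`, with `A i t = a_{i t₁ ⋯ t_{m-1}}`. -/

/-- The majorization matrix `M(A)_{ij} = a_{ij⋯j}`. -/
def maj (n m : ℕ) (A : Fin n → (Fin (m-1) → Fin n) → ℝ) :
    Matrix (Fin n) (Fin n) ℝ :=
  fun i j => A i (fun _ => j)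

/-- The majorization matrices of the Shao-product powers of `A`:
`majPow n m A k = M(A^k)`, via the recursion
`M(A^{k+1})_{uj} = Σ_{j₂,…,j_m} a_{u j₂ ⋯ j_m} M(A^k)_{j₂ j} ⋯ M(A^k)_{j_m j}`
(with `M(A^0)` the identity, so that `majPow n m A 1 = maj n m A`). -/
def majPow (n m : ℕ) (A : Fin n → (Fin (m-1) → Fin n) → ℝ) :
    ℕ → Matrix (Fin n) (Fin n) ℝ
  | 0 => 1
  | k + 1 => fun u j =>
      ∑ t : Fin (m-1) → Fin n, A u t * ∏ i, majPow n m A k (t i) j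

/-- `A` is primitive: `M(A^r) > 0` entrywise for some positive `r`. -/
def Primitive (n m : ℕ) (A : Fin n → (Fin (m-1) → Fin n) → ℝ) : Prop :=
  ∃ r, 0 < r ∧ ∀ u j, 0 < majPow n m A r u j

section aux

variable {n m : ℕ} {A : Fin n → (Fin (m-1) → Fin n) → ℝ}

lemma majPow_succ (k : ℕ) (u j : Fin n) :
    majPow n m A (k+1) u j = ∑ t : Fin (m-1) → Fin n, A u t * ∏ i, majPow n m A k (t i) j := rfl

lemma majPow_nonneg (hA : ∀ u t, 0 ≤ A u t) : ∀ k u j, 0 ≤ majPow n m A k u j := by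
  intro k
  induction k with
  | zero =>
    intro u j
    show (0:ℝ) ≤ (1 : Matrix (Fin n) (Fin n) ℝ) u j
    rw [Matrix.one_apply]
    split <;> norm_num
  | succ k ih =>
    intro u j
    rw [majPow_succ]
    exact Finset.sum_nonneg fun t _ =>
      mul_nonneg (hA u t) (Finset.prod_nonneg fun i _ => ih (t i) j)

lemma majPow_one (u j : Fin n) : majPow n m A 1 u j = maj n m A u j := by
  rw [majPow_succ]
  rw [Fintype.sum_eq_single (fun _ => j : Fin (m-1) → Fin n)]
  · show A u _ * ∏ _i, (1 : Matrix (Fin n) (Fin n) ℝ) j j = _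
    rw [Matrix.one_apply_eq]
    simp [maj]
  · intro t ht
    obtain ⟨i, hi⟩ := Function.ne_iff.mp ht
    have : (majPow n m A 0) (t i) j = 0 := Matrix.one_apply_ne hi
    rw [Finset.prod_eq_zero (Finset.mem_univ i) this, mul_zero]

lemma majPow_succ_pos_elim (hA : ∀ u t, 0 ≤ A u t) {k : ℕ} {u j : Fin n}
    (h : 0 < majPow n m A (k+1) u j) :
    ∃ t, 0 < A u t ∧ ∀ i, 0 < majPow n m A k (t i) j := by
  rw [majPow_succ] at h
  by_contra hc
  push_neg at hc
  refine absurd h (not_lt.mpr (Finset.sum_nonpos fun t _ => ?_))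
  by_cases hAt : 0 < A u t
  · obtain ⟨i, hi⟩ := hc t hAt
    have h0 : majPow n m A k (t i) j = 0 := le_antisymm hi (majPow_nonneg hA k (t i) j)
    rw [Finset.prod_eq_zero (Finset.mem_univ i) h0, mul_zero]
  · have : A u t = 0 := le_antisymm (not_lt.mp hAt) (hA u t)
    rw [this, zero_mul]

lemma pos_comp (hA : ∀ u t, 0 ≤ A u t) :
    ∀ a b (u v j : Fin n), 0 < majPow n m A a u v → 0 < majPow n m A b v j →
      0 < majPow n m A (a+b) u j := by
  intro a
  induction a with
  | zero =>
    intro b u v j h1 h2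
    have huv : u = v := by
      by_contra hne
      have h0 : majPow n m A 0 u v = 0 := Matrix.one_apply_ne hne
      rw [h0] at h1
      exact lt_irrefl _ h1
    subst huv
    simpa using h2
  | succ a ih =>
    intro b u v j h1 h2
    obtain ⟨t, hAt, ht⟩ := majPow_succ_pos_elim hA h1
    have key : ∀ i, 0 < majPow n m A (a+b) (t i) j := fun i => ih b (t i) v j (ht i) h2
    have heq : a + 1 + b = (a + b) + 1 := by omega
    rw [heq, majPow_succ]
    apply Finset.sum_pos'
    · intro t' _
      exact mul_nonneg (hA u t') (Finset.prod_nonneg fun i _ => majPow_nonneg hA _ _ _)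
    · exact ⟨t, Finset.mem_univ t,
        mul_pos hAt (Finset.prod_pos fun i _ => key i)⟩

lemma exists_in (hA : ∀ u t, 0 ≤ A u t) (hm' : 0 < m - 1) :
    ∀ k (u j : Fin n), 0 < majPow n m A (k+1) u j → ∃ v, 0 < maj n m A v j := by
  intro k
  induction k with
  | zero =>
    intro u j h
    exact ⟨u, by rwa [← majPow_one]⟩
  | succ k ih =>
    intro u j h
    obtain ⟨t, _, ht⟩ := majPow_succ_pos_elim hA h
    exact ih (t ⟨0, hm'⟩) j (ht ⟨0, hm'⟩)

end aux


/-- a primitive tensor has `M(A^l)_{jj} > 0` for some `j` and some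
`1 ≤ l ≤ n-1`. -/
theorem stmt_10 (n m : ℕ) (hm : 2 ≤ m) (hn : 2 ≤ n)
    (A : Fin n → (Fin (m-1) → Fin n) → ℝ) (hA : ∀ u t, 0 ≤ A u t)
    (hprim : Primitive n m A) :
    ∃ (j : Fin n) (l : ℕ), 1 ≤ l ∧ l ≤ n - 1 ∧ 0 < majPow n m A l j j := by
  have hprim' : ∃ r, 0 < r ∧ ∀ u j, 0 < majPow n m A r u j := hprim
  obtain ⟨r, hr, hpos⟩ := hprim'
  by_contra hcon
  push_neg at hcon
  have hm' : 0 < m - 1 := by omega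
  -- in-neighbor function
  have hg : ∀ v : Fin n, ∃ u, 0 < maj n m A u v := by
    intro v
    obtain ⟨r', hr'⟩ : ∃ r', r = r' + 1 := ⟨r - 1, by omega⟩
    exact exists_in hA hm' r' v v (by rw [← hr']; exact hpos v v)
  choose g hgp using hg
  set j0 : Fin n := ⟨0, by omega⟩ with hj0
  set w : ℕ → Fin n := fun k => g^[k] j0 with hw
  have hstep : ∀ k, 0 < maj n m A (w (k+1)) (w k) := by
    intro k
    have : w (k+1) = g (w k) := Function.iterate_succ_apply' g k j0
    rw [this]
    exact hgp (w k)
  have hwalk : ∀ k d, 0 < majPow n m A d (w (k+d)) (w k) := by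
    intro k d
    induction d with
    | zero =>
      show (0:ℝ) < (1 : Matrix (Fin n) (Fin n) ℝ) (w (k+0)) (w k)
      rw [Nat.add_zero, Matrix.one_apply_eq]
      norm_num
    | succ d ih =>
      have h1 : 0 < majPow n m A 1 (w (k+d+1)) (w (k+d)) := by
        rw [majPow_one]; exact hstep (k+d)
      have := pos_comp hA 1 d (w (k+d+1)) (w (k+d)) (w k) h1 ih
      have he : k + (d+1) = k + d + 1 := by omega
      rw [he]
      have he2 : (1 : ℕ) + d = d + 1 := by omega
      rwa [he2] at this
  -- no repetitions at distance 1..n-1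
  have hnorep : ∀ a b, a < b → b - a ≤ n - 1 → w a ≠ w b := by
    intro a b hab hba heq
    have h1 := hwalk a (b - a)
    rw [Nat.add_sub_cancel' (le_of_lt hab)] at h1
    rw [← heq] at h1
    exact absurd h1 (not_lt.mpr (hcon (w a) (b - a) (by omega) hba))
  -- pigeonhole gives w n = w 0
  have hper0 : w n = w 0 := by
    obtain ⟨x, y, hxy, hfe⟩ :=
      Fintype.exists_ne_map_eq_of_card_lt (fun i : Fin (n+1) => w i.val) (by simp)
    rcases lt_trichotomy x.val y.val with h | h | h
    · have hd : y.val - x.val = n := by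
        by_contra hne
        exact hnorep x.val y.val h (by omega) hfe
      have hx0 : x.val = 0 := by omega
      have hyn : y.val = n := by omega
      rw [hx0, hyn] at hfe
      exact hfe.symm
    · exact absurd (Fin.ext h) hxy
    · have hd : x.val - y.val = n := by
        by_contra hne
        exact hnorep y.val x.val h (by omega) hfe.symm
      have hy0 : y.val = 0 := by omega
      have hxn : x.val = n := by omega
      rw [hy0, hxn] at hfe
      exact hfe
  have hper : ∀ k, w (k + n) = w k := by
    intro k
    have h1 : w (k + n) = g^[k] (g^[n] j0) := Function.iterate_add_apply g k n j0
    have h2 : g^[n] j0 = j0 := hper0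
    rw [h1, h2]
  have hmuln : ∀ q k, w (k + q * n) = w k := by
    intro q
    induction q with
    | zero => intro k; simp
    | succ q ih =>
      intro k
      have : k + (q+1) * n = (k + q * n) + n := by ring
      rw [this, hper, ih]
  have hmod : ∀ k, w k = w (k % n) := by
    intro k
    conv_lhs => rw [← Nat.mod_add_div' k n]
    exact hmuln (k / n) (k % n)
  have hinj : ∀ i j, i < n → j < n → w i = w j → i = j := by
    intro i j hi hj heq
    rcases lt_trichotomy i j with h | h | h
    · exact absurd heq (hnorep i j h (by omega))
    · exact h
    · exact absurd heq.symm (hnorep j i h (by omega))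
  have hsurj : ∀ v : Fin n, ∃ s, s < n ∧ w s = v := by
    have hWinj : Function.Injective (fun i : Fin n => w i.val) := by
      intro a b hab
      exact Fin.ext (hinj a.val b.val a.isLt b.isLt hab)
    have hWsurj := Finite.surjective_of_injective hWinj
    intro v
    obtain ⟨s, hs⟩ := hWsurj v
    exact ⟨s.val, s.isLt, hs⟩
  -- edge rigidity for i < n
  have hedge' : ∀ (u : Fin n) i, i < n → 0 < maj n m A u (w i) → u = w (i+1) := by
    intro u i hi hmaj
    obtain ⟨s, hs, hsu⟩ := hsurj u
    have h1 : 0 < majPow n m A 1 u (w i) := by rwa [majPow_one]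
    rcases le_or_gt s i with hsi | his
    · -- b = i - s, cycle length 1 + (i-s) ∈ [1, n]
      have hwb : w (s + (i - s)) = w i := by rw [Nat.add_sub_cancel' hsi]
      have h2 := hwalk s (i - s)
      rw [hwb] at h2
      have h3 := pos_comp hA 1 (i - s) u (w i) (w s) h1 h2
      rw [← hsu] at h3
      have hlen : 1 + (i - s) = n := by
        by_contra hne
        exact absurd h3 (not_lt.mpr (hcon (w s) (1 + (i - s)) (by omega) (by omega)))
      have hs0 : s = 0 ∧ i = n - 1 := by omega
      rw [← hsu, hs0.1, hs0.2]
      have he : n - 1 + 1 = n := by omega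
      rw [he]
      exact hper0.symm
    · -- b = i + n - s
      have hwb : w (s + (i + n - s)) = w i := by
        have : s + (i + n - s) = i + n := by omega
        rw [this, hper]
      have h2 := hwalk s (i + n - s)
      rw [hwb] at h2
      have h3 := pos_comp hA 1 (i + n - s) u (w i) (w s) h1 h2
      rw [← hsu] at h3
      have hlen : 1 + (i + n - s) = n := by
        by_contra hne
        exact absurd h3 (not_lt.mpr (hcon (w s) (1 + (i + n - s)) (by omega) (by omega)))
      have hsi1 : s = i + 1 := by omega
      rw [← hsu, hsi1]
  -- edge rigidity for all i
  have hedge : ∀ (u : Fin n) i, 0 < maj n m A u (w i) → u = w (i+1) := by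
    intro u i hmaj
    rw [hmod i] at hmaj
    have h1 := hedge' u (i % n) (Nat.mod_lt i (by omega)) hmaj
    have h2 : (i % n + 1) % n = (i + 1) % n := by
      rw [Nat.add_mod i 1 n, Nat.mod_eq_of_lt (show (1:ℕ) < n by omega)]
    rw [h1, hmod (i % n + 1), h2, ← hmod (i + 1)]
  -- characterization of positivity
  have hchar : ∀ k (u : Fin n) i, 0 < majPow n m A k u (w i) → u = w (i + k) := by
    intro k
    induction k with
    | zero =>
      intro u i h
      by_contra hne
      have h0 : majPow n m A 0 u (w i) = 0 := Matrix.one_apply_ne (by simpa using hne)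
      rw [h0] at h
      exact lt_irrefl _ h
    | succ k ih =>
      intro u i h
      obtain ⟨t, hAt, ht⟩ := majPow_succ_pos_elim hA h
      have htc : t = fun _ => w (i + k) := funext fun q => ih (t q) i (ht q)
      have hmaj : 0 < maj n m A u (w (i + k)) := by
        rw [maj]
        rw [htc] at hAt
        exact hAt
      rw [show i + (k+1) = i + k + 1 from by omega]
      exact hedge u (i + k) hmaj
  -- contradiction
  have e0 : w 0 = w (0 + r) := hchar r (w 0) 0 (hpos (w 0) (w 0))
  have e1 : w 1 = w (0 + r) := hchar r (w 1) 0 (hpos (w 1) (w 0))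
  have : w 0 = w 1 := e0.trans e1.symm
  have := hinj 0 1 (by omega) (by omega) this
  omega
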